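/- Let (X,d) be a metric space and μ a Borel measure on X. Let 0 < R_X ≤ ∞, let V : [0,R_X) → [0,∞) be increasing with V(r) > 0 for r > 0 and with V(Λρ) ≤ C_u·Λ^{β_u}·V(ρ) whenever Λ ≥ 1 and Λρ < R_X (where C_u ≥ 1, β_u > 0). Let f_l : [0,R_X) → [0,1] be increasing with f_l(r) > 0 for r > 0 and f_l(λρ) ≥ c_a·λ^b·f_l(ρ) for all λ ∈ (0,1], ρ ∈ [0,R_X), and let f_u : [0,R_X) → [1,∞) be decreasing with f_u(λρ) ≤ c_b·λ^{-b}·f_u(ρ) for all λ ∈ (0,1], ρ ∈ [0,R_X) (where b, c_a, c_b > 0). Suppose f_l(ρ)·V(ρ) ≤ μ(B(y,ρ)) ≤ f_u(ρ)·V(ρ) < ∞ for every y ∈ X and ρ ∈ [0,R_X). Set g := f_l/f_u. Then for every fixed ε ∈ (0,1/2] there exists a constant c₁ > 0 (depending on ε, b, c_a, c_b, C_u, β_u) such that for every x ∈ X and every r ∈ (0, R_X/2) there exist points y₁, …, y_m ∈ B(x,r) with m ≤ c₁·g(r)^{-1} and B(x,r) ⊆ ⋃_{i=1}^m B(y_i,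 ε·r). -/

import Mathlib

open Set MeasureTheory Metric ENNReal

/-- Covering lemma: under the stated volume growth with fluctuations `f_l`, `f_u`
(and their scaling inequalities), for each fixed `ε ∈ (0,1/2]` there is a constant
`c₁ > 0` such that every ball `B(x,r)`, `0 < r < R_X/2`, can be covered by at most
`c₁ · g(r)⁻¹` balls of radius `ε·r` with centres in `B(x,r)`, where `g := f_l/f_u`. -/
theorem covering_lemma
    {X : Type*} [MetricSpace X] [MeasurableSpace X] [BorelSpace X]
    (μ : Measure X)
    (RX : ℝ≥0∞) (hRX : 0 < RX)
    (V fl fu : ℝ → ℝ)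
    (Cu βu : ℝ) (hCu : 1 ≤ Cu) (hβu : 0 < βu)
    (hVnonneg : ∀ r : ℝ, 0 ≤ r → ENNReal.ofReal r < RX → 0 ≤ V r)
    (hVpos : ∀ r : ℝ, 0 < r → ENNReal.ofReal r < RX → 0 < V r)
    (hVmono : ∀ r s : ℝ, 0 ≤ r → r ≤ s → ENNReal.ofReal s < RX → V r ≤ V s)
    (hVdoub : ∀ Λ ρ : ℝ, 1 ≤ Λ → 0 ≤ ρ → ENNReal.ofReal (Λ * ρ) < RX →
      V (Λ * ρ) ≤ Cu * Λ ^ βu * V ρ)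
    (b ca cb : ℝ) (hb : 0 < b) (hca : 0 < ca) (hcb : 0 < cb)
    (hfl01 : ∀ r : ℝ, 0 ≤ r → ENNReal.ofReal r < RX → fl r ∈ Set.Icc (0 : ℝ) 1)
    (hflpos : ∀ r : ℝ, 0 < r → ENNReal.ofReal r < RX → 0 < fl r)
    (hflmono : ∀ r s : ℝ, 0 ≤ r → r ≤ s → ENNReal.ofReal s < RX → fl r ≤ fl s)
    (hflscale : ∀ lam ρ : ℝ, 0 < lam → lam ≤ 1 → 0 ≤ ρ → ENNReal.ofReal ρ < RX →
      ca * lam ^ b * fl ρ ≤ fl (lam * ρ))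
    (hfu1 : ∀ r : ℝ, 0 ≤ r → ENNReal.ofReal r < RX → 1 ≤ fu r)
    (hfumono : ∀ r s : ℝ, 0 ≤ r → r ≤ s → ENNReal.ofReal s < RX → fu s ≤ fu r)
    (hfuscale : ∀ lam ρ : ℝ, 0 < lam → lam ≤ 1 → 0 ≤ ρ → ENNReal.ofReal ρ < RX →
      fu (lam * ρ) ≤ cb * lam ^ (-b) * fu ρ)
    (hvol : ∀ (y : X) (ρ : ℝ), 0 ≤ ρ → ENNReal.ofReal ρ < RX →
      ENNReal.ofReal (fl ρ * V ρ) ≤ μ (Metric.ball y ρ) ∧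
        μ (Metric.ball y ρ) ≤ ENNReal.ofReal (fu ρ * V ρ))
    (g : ℝ → ℝ) (hg : ∀ r : ℝ, g r = fl r / fu r)
    (ε : ℝ) (hε : 0 < ε) (hε' : ε ≤ 1 / 2) :
    ∃ c₁ : ℝ, 0 < c₁ ∧ ∀ (x : X) (r : ℝ), 0 < r → ENNReal.ofReal r < RX / 2 →
      ∃ (m : ℕ) (y : Fin m → X),
        (∀ i, y i ∈ Metric.ball x r) ∧
        (m : ℝ) ≤ c₁ * (g r)⁻¹ ∧
        Metric.ball x r ⊆ ⋃ i, Metric.ball (y i) (ε * r) := by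
  classical
  have hCu0 : (0:ℝ) < Cu := lt_of_lt_of_le one_pos hCu
  set c₁ : ℝ := Cu * (4 / ε) ^ βu / (ca * (ε / 2) ^ b) with hc₁def
  have hc₁pos : 0 < c₁ := by positivity
  refine ⟨c₁, hc₁pos, ?_⟩
  intro x r hr hrRX
  have hrRX' : ENNReal.ofReal r < RX := lt_of_lt_of_le hrRX ENNReal.half_le_self
  have h2r : ENNReal.ofReal (2 * r) < RX := by
    have e1 : ENNReal.ofReal (2 * r) = 2 * ENNReal.ofReal r := by
      rw [ENNReal.ofReal_mul (by norm_num)]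
      norm_num
    have e2 : 2 * ENNReal.ofReal r < 2 * (RX / 2) := by
      exact (ENNReal.mul_lt_mul_iff_right (by norm_num) (by norm_num)).2 hrRX
    have e3 : 2 * (RX / 2) ≤ RX := by
      rw [ENNReal.mul_div_cancel (by norm_num) (by norm_num)]
    rw [e1]
    exact lt_of_lt_of_le e2 e3
  -- s is the separation radius / half the covering radius
  set s : ℝ := ε * r / 2 with hsdef
  have hspos : 0 < s := by positivity
  have hsler : s ≤ r := by nlinarith
  have hsRX : ENNReal.ofReal s < RX :=
    lt_of_le_of_lt (ENNReal.ofReal_le_ofReal hsler) hrRX'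
  have hVs : 0 < V s := hVpos s hspos hsRX
  have hflr : 0 < fl r := hflpos r hr hrRX'
  have hfur : (1:ℝ) ≤ fu r := hfu1 r hr.le hrRX'
  have hfur0 : (0:ℝ) < fu r := lt_of_lt_of_le one_pos hfur
  have hginv : (g r)⁻¹ = fu r / fl r := by
    rw [hg, inv_div]
  -- key cardinality bound for separated sets
  have key : ∀ T : Finset X, (↑T ⊆ Metric.ball x r) →
      (∀ t ∈ T, ∀ t' ∈ T, t ≠ t' → ε * r ≤ dist t t') →
      (T.card : ℝ) ≤ c₁ * (g r)⁻¹ := by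
    intro T hTsub hTsep
    -- the balls of radius s around points of T are pairwise disjoint
    have hdisj : (↑T : Set X).PairwiseDisjoint (fun t => Metric.ball t s) := by
      intro t ht t' ht' hne
      apply Metric.ball_disjoint_ball
      have := hTsep t ht t' ht' hne
      nlinarith
    have hmeas : ∀ t ∈ T, MeasurableSet (Metric.ball t s) := fun t _ =>
      measurableSet_ball
    have hsum : μ (⋃ t ∈ T, Metric.ball t s) = ∑ t ∈ T, μ (Metric.ball t s) :=
      measure_biUnion_finset hdisj hmeas
    have hsub2 : (⋃ t ∈ T, Metric.ball t s) ⊆ Metric.ball x (2 * r) := by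
      intro z hz
      simp only [Set.mem_iUnion] at hz
      obtain ⟨t, ht, hzt⟩ := hz
      have h1 : dist t x < r := hTsub ht
      have h2 : dist z t < s := hzt
      have : dist z x ≤ dist z t + dist t x := dist_triangle z t x
      simp only [Metric.mem_ball]
      nlinarith
    have hlow : (T.card : ℝ≥0∞) * ENNReal.ofReal (fl s * V s) ≤
        ∑ t ∈ T, μ (Metric.ball t s) := by
      calc (T.card : ℝ≥0∞) * ENNReal.ofReal (fl s * V s)
          = ∑ _t ∈ T, ENNReal.ofReal (fl s * V s) := by
            rw [Finset.sum_const, nsmul_eq_mul]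
        _ ≤ ∑ t ∈ T, μ (Metric.ball t s) :=
            Finset.sum_le_sum fun t _ => (hvol t s hspos.le hsRX).1
    have hup : μ (Metric.ball x (2 * r)) ≤ ENNReal.ofReal (fu (2 * r) * V (2 * r)) :=
      (hvol x (2 * r) (by positivity) h2r).2
    have hchain : (T.card : ℝ≥0∞) * ENNReal.ofReal (fl s * V s) ≤
        ENNReal.ofReal (fu (2 * r) * V (2 * r)) := by
      calc (T.card : ℝ≥0∞) * ENNReal.ofReal (fl s * V s)
          ≤ ∑ t ∈ T, μ (Metric.ball t s) := hlow
        _ = μ (⋃ t ∈ T, Metric.ball t s) := hsum.symm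
        _ ≤ μ (Metric.ball x (2 * r)) := measure_mono hsub2
        _ ≤ _ := hup
    -- convert to a real inequality
    have hV2r0 : 0 ≤ V (2 * r) := hVnonneg (2 * r) (by positivity) h2r
    have hfu2r : (1:ℝ) ≤ fu (2 * r) := hfu1 (2 * r) (by positivity) h2r
    have hreal : (T.card : ℝ) * (fl s * V s) ≤ fu (2 * r) * V (2 * r) := by
      have := hchain
      rw [show ((T.card : ℝ≥0∞)) = ENNReal.ofReal (T.card : ℝ) by
        simp [ENNReal.ofReal_natCast], ← ENNReal.ofReal_mul (by positivity)] at this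
      exact (ENNReal.ofReal_le_ofReal_iff (by positivity)).1 this
    -- scaling inequalities
    have hscale1 : ca * (ε / 2) ^ b * fl r ≤ fl s := by
      have := hflscale (ε / 2) r (by positivity) (by linarith) hr.le hrRX'
      have he : (ε / 2) * r = s := by rw [hsdef]; ring
      rwa [he] at this
    have hscale2 : V (2 * r) ≤ Cu * (4 / ε) ^ βu * V s := by
      have h4e : (1:ℝ) ≤ 4 / ε := by
        rw [le_div_iff₀ hε]; linarith
      have := hVdoub (4 / ε) s h4e hspos.le (by
        have he : (4 / ε) * s = 2 * r := by
          rw [hsdef]; field_simp; ring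
        rwa [he])
      have he : (4 / ε) * s = 2 * r := by
        rw [hsdef]; field_simp; ring
      rwa [he] at this
    have hscale3 : fu (2 * r) ≤ fu r := hfumono r (2 * r) hr.le (by linarith) h2r
    -- combine
    have hpow1 : (0:ℝ) < ca * (ε / 2) ^ b := by positivity
    have H2 : (T.card : ℝ) * (ca * (ε / 2) ^ b * fl r) * V s ≤
        fu r * (Cu * (4 / ε) ^ βu) * V s := by
      calc (T.card : ℝ) * (ca * (ε / 2) ^ b * fl r) * V s
          = (T.card : ℝ) * ((ca * (ε / 2) ^ b * fl r) * V s) := by ring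
        _ ≤ (T.card : ℝ) * (fl s * V s) := by
            apply mul_le_mul_of_nonneg_left _ (Nat.cast_nonneg _)
            exact mul_le_mul_of_nonneg_right hscale1 hVs.le
        _ ≤ fu (2 * r) * V (2 * r) := hreal
        _ ≤ fu r * (Cu * (4 / ε) ^ βu * V s) := by
            apply mul_le_mul hscale3 hscale2 hV2r0 hfur0.le
        _ = fu r * (Cu * (4 / ε) ^ βu) * V s := by ring
    have H3 : (T.card : ℝ) * (ca * (ε / 2) ^ b * fl r) ≤
        fu r * (Cu * (4 / ε) ^ βu) := le_of_mul_le_mul_right H2 hVs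
    have H4 : (T.card : ℝ) ≤ fu r * (Cu * (4 / ε) ^ βu) / (ca * (ε / 2) ^ b * fl r) := by
      rw [le_div_iff₀ (by positivity)]
      exact H3
    have heq : c₁ * (g r)⁻¹ = fu r * (Cu * (4 / ε) ^ βu) / (ca * (ε / 2) ^ b * fl r) := by
      rw [hginv, hc₁def]
      field_simp
    rw [heq]
    exact H4
  -- take a separated set of maximal cardinality
  set S : Set ℕ := {n | ∃ T : Finset X, (↑T ⊆ Metric.ball x r) ∧
    (∀ t ∈ T, ∀ t' ∈ T, t ≠ t' → ε * r ≤ dist t t') ∧ T.card = n} with hSdef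
  have h0S : 0 ∈ S := ⟨∅, by simp⟩
  have hbdd : BddAbove S := by
    refine ⟨⌊c₁ * (g r)⁻¹⌋₊, ?_⟩
    rintro n ⟨T, h1, h2, h3⟩
    rw [← h3]
    exact Nat.le_floor (key T h1 h2)
  have hmem : sSup S ∈ S := Nat.sSup_mem ⟨0, h0S⟩ hbdd
  obtain ⟨T, hTsub, hTsep, hTcard⟩ := hmem
  refine ⟨T.card, fun i => (T.equivFin.symm i : X), ?_, ?_, ?_⟩
  · intro i
    exact hTsub (T.equivFin.symm i).2
  · exact key T hTsub hTsep
  · intro z hz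
    -- there is t ∈ T with dist z t < ε * r, by maximality
    have hex : ∃ t ∈ T, dist z t < ε * r := by
      by_contra hcon
      push_neg at hcon
      have hzT : z ∉ T := by
        intro hzT
        have := hcon z hzT
        simp at this
        nlinarith
      have hins : T.card + 1 ∈ S := by
        refine ⟨insert z T, ?_, ?_, ?_⟩
        · intro w hw
          simp only [Finset.coe_insert, Set.mem_insert_iff] at hw
          rcases hw with rfl | hw
          · exact hz
          · exact hTsub hw
        · intro t ht t' ht' hne
          simp only [Finset.mem_insert] at ht ht'
          rcases ht with rfl | ht
          · rcases ht' with rfl | ht'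
            · exact absurd rfl hne
            · exact hcon t' ht'
          · rcases ht' with rfl | ht'
            · rw [dist_comm]
              exact hcon t ht
            · exact hTsep t ht t' ht' hne
        · exact Finset.card_insert_of_notMem hzT
      have := le_csSup hbdd hins
      rw [← hTcard] at this
      omega
    obtain ⟨t, ht, hdist⟩ := hex
    refine Set.mem_iUnion.2 ⟨T.equivFin ⟨t, ht⟩, ?_⟩
    simp only [Metric.mem_ball, Equiv.symm_apply_apply]
    exact hdist
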